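/- arXiv:2505.04370 — 3 statements merged into one kernel-verified Lean document; each statement's English description precedes it below -/
import Mathlib

section
/- Let n ≥ 1 and let M be a real symmetric positive semidefinite n×n matrix. Then (det M)^(1/n) = (1/n) · inf_{B ∈ 𝓑} tr(B·M), where the infimum is taken over all B ∈ 𝓑. -/
open Matrix

/-- AM-GM for psd matrices: `n * (det A)^(1/n) ≤ trace A`. -/
lemma amgm_psd {n : ℕ} (hn : 1 ≤ n) (A : Matrix (Fin n) (Fin n) ℝ) (hA : A.PosSemidef) :
    (n : ℝ) * A.det ^ ((1 : ℝ) / n) ≤ A.trace := by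
  have hH := hA.isHermitian
  set d := hH.eigenvalues with hd
  have hd0 : ∀ i, 0 ≤ d i := fun i => hA.eigenvalues_nonneg i
  have hdet : A.det = ∏ i, d i := by
    simpa using hH.det_eq_prod_eigenvalues
  have htr : A.trace = ∑ i, d i := by
    have hU := (Matrix.mem_unitaryGroup_iff').mp (hH.eigenvectorUnitary).2
    conv_lhs => rw [hH.spectral_theorem]
    rw [Unitary.conjStarAlgAut_apply, Matrix.trace_mul_cycle, hU, one_mul]
    simp [RCLike.ofReal_real_eq_id, Matrix.trace_diagonal, hd]
  have hn' : (n : ℝ) ≠ 0 := Nat.cast_ne_zero.mpr (by omega)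
  have key := Real.geom_mean_le_arith_mean_weighted Finset.univ
    (fun _ => (1 : ℝ) / n) d (fun _ _ => by positivity)
    (by simp [Finset.card_univ, mul_comm]; field_simp) (fun i _ => hd0 i)
  rw [Real.finset_prod_rpow Finset.univ d (fun i _ => hd0 i)] at key
  rw [hdet, htr]
  calc (n : ℝ) * (∏ i, d i) ^ ((1:ℝ)/n) ≤ (n : ℝ) * ∑ i, (1:ℝ)/n * d i := by
        apply mul_le_mul_of_nonneg_left key (by positivity)
    _ = ∑ i, d i := by rw [← Finset.mul_sum, ← mul_assoc]; field_simp

/-- Conjugation of a posdef matrix by a unitary is posdef. -/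
lemma conj_posDef {n : ℕ} {U E : Matrix (Fin n) (Fin n) ℝ}
    (hU : U ∈ Matrix.unitaryGroup (Fin n) ℝ) (hE : E.PosDef) :
    (U * E * star U).PosDef := by
  have h1 : U * star U = 1 := Matrix.mem_unitaryGroup_iff.mp hU
  refine Matrix.posDef_iff_dotProduct_mulVec.mpr ⟨?_, fun x hx => ?_⟩
  · have := hE.isHermitian
    rw [Matrix.IsHermitian, Matrix.star_eq_conjTranspose, Matrix.conjTranspose_mul,
      Matrix.conjTranspose_mul, Matrix.conjTranspose_conjTranspose, this.eq, mul_assoc]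
  · have hy : star U *ᵥ x ≠ 0 := by
      intro h
      apply hx
      have : U *ᵥ (star U *ᵥ x) = x := by
        rw [Matrix.mulVec_mulVec, h1, Matrix.one_mulVec]
      rw [← this, h, Matrix.mulVec_zero]
    have := hE.dotProduct_mulVec_pos hy
    simpa only [Matrix.star_mulVec, Matrix.dotProduct_mulVec, Matrix.vecMul_vecMul,
      Matrix.star_eq_conjTranspose, Matrix.conjTranspose_conjTranspose, Matrix.mulVec_mulVec,
      mul_assoc] using this

lemma conj_mul_conj {n : ℕ} {U : Matrix (Fin n) (Fin n) ℝ}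
    (hU2 : star U * U = 1) (e d : Fin n → ℝ) :
    (U * Matrix.diagonal e * star U) * (U * Matrix.diagonal d * star U)
      = U * Matrix.diagonal (fun i => e i * d i) * star U := by
  have : Matrix.diagonal (fun i => e i * d i) = Matrix.diagonal e * Matrix.diagonal d := by
    rw [Matrix.diagonal_mul_diagonal]
  rw [this]
  simp only [mul_assoc]
  rw [show star U * (U * (Matrix.diagonal d * star U)) = Matrix.diagonal d * star U by
    rw [← mul_assoc, hU2, one_mul]]

lemma trace_conj_diag {n : ℕ} {U : Matrix (Fin n) (Fin n) ℝ}
    (hU2 : star U * U = 1) (e : Fin n → ℝ) :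
    (U * Matrix.diagonal e * star U).trace = ∑ i, e i := by
  rw [Matrix.trace_mul_cycle, hU2, one_mul, Matrix.trace_diagonal]

lemma det_conj_diag {n : ℕ} {U : Matrix (Fin n) (Fin n) ℝ}
    (hU2 : star U * U = 1) (e : Fin n → ℝ) :
    (U * Matrix.diagonal e * star U).det = ∏ i, e i := by
  have h : U.det * (star U).det = 1 := by
    rw [mul_comm, ← Matrix.det_mul, hU2, Matrix.det_one]
  rw [Matrix.det_mul, Matrix.det_mul, Matrix.det_diagonal]
  linear_combination (∏ i, e i) * h

open scoped MatrixOrder in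
/-- Lower bound: for `B` posdef with `det B = 1`, `n (det M)^(1/n) ≤ tr (B M)`. -/
lemma lower_bound {n : ℕ} (hn : 1 ≤ n) (M : Matrix (Fin n) (Fin n) ℝ)
    (hM : M.PosSemidef) {B : Matrix (Fin n) (Fin n) ℝ} (hB : B.PosDef)
    (hdB : B.det = 1) :
    (n : ℝ) * M.det ^ ((1 : ℝ) / n) ≤ (B * M).trace := by
  set s := CFC.sqrt M with hs_def
  have hs : s.PosSemidef := (CFC.sqrt_nonneg M).posSemidef
  have hherm : sᴴ = s := hs.isHermitian
  have hA : (s * B * s).PosSemidef := by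
    have := hB.posSemidef.mul_mul_conjTranspose_same s
    rwa [hherm] at this
  have hss : s * s = M := CFC.sqrt_mul_sqrt_self M hM.nonneg
  have htr : (s * B * s).trace = (B * M).trace := by
    rw [Matrix.trace_mul_cycle, hss, Matrix.trace_mul_comm]
  have hdet : (s * B * s).det = M.det := by
    rw [Matrix.det_mul, Matrix.det_mul, hdB, mul_one, ← Matrix.det_mul, hss]
  have := amgm_psd hn _ hA
  rwa [htr, hdet] at this


/-- **Bellman's principle.** For a real symmetric positive semidefinite `n × n` matrix `M`
(`n ≥ 1`), one has `(det M)^(1/n) = (1/n) · inf_{B ∈ 𝓑} tr(B·M)`, where `𝓑` is the set of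
real symmetric positive definite `n × n` matrices of determinant `1`. -/
theorem bellman_principle (n : ℕ) (hn : 1 ≤ n)
    (M : Matrix (Fin n) (Fin n) ℝ) (hM : M.PosSemidef) :
    M.det ^ ((1 : ℝ) / n) =
      (1 / n) * sInf ((fun B : Matrix (Fin n) (Fin n) ℝ => (B * M).trace) ''
        {B : Matrix (Fin n) (Fin n) ℝ | B.PosDef ∧ B.det = 1}) := by
  classical
  have hnne : (n : ℝ) ≠ 0 := Nat.cast_ne_zero.mpr (by omega)
  have hn0 : (0 : ℝ) < n := by
    have : 0 < n := hn
    exact_mod_cast this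
  set S := ((fun B : Matrix (Fin n) (Fin n) ℝ => (B * M).trace) ''
      {B : Matrix (Fin n) (Fin n) ℝ | B.PosDef ∧ B.det = 1}) with hS_def
  have hlb : ∀ x ∈ S, (n : ℝ) * M.det ^ ((1 : ℝ) / n) ≤ x := by
    rintro x ⟨B, ⟨hB, hdB⟩, rfl⟩
    exact lower_bound hn M hM hB hdB
  have hbdd : BddBelow S := ⟨_, hlb⟩
  -- spectral setup
  have hH := hM.isHermitian
  set U := (hH.eigenvectorUnitary : Matrix (Fin n) (Fin n) ℝ) with hU_def
  have hUmem : U ∈ Matrix.unitaryGroup (Fin n) ℝ := (hH.eigenvectorUnitary).2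
  have hU2 : star U * U = 1 := Matrix.mem_unitaryGroup_iff'.mp hUmem
  set d := hH.eigenvalues with hd_def
  have hspec : M = U * Matrix.diagonal d * star U := by
    simpa [RCLike.ofReal_real_eq_id] using hH.spectral_theorem
  have hd0 : ∀ i, 0 ≤ d i := fun i => hM.eigenvalues_nonneg i
  have hdet : M.det = ∏ i, d i := by simpa using hH.det_eq_prod_eigenvalues
  -- membership builder
  have key : ∀ e : Fin n → ℝ, (∀ i, 0 < e i) → (∏ i, e i) = 1 →
      (∑ i, e i * d i) ∈ S := by
    intro e he hprod
    refine ⟨U * Matrix.diagonal e * star U,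
      ⟨conj_posDef hUmem (Matrix.PosDef.diagonal he), by rw [det_conj_diag hU2 e]; exact hprod⟩, ?_⟩
    show ((U * Matrix.diagonal e * star U) * M).trace = _
    rw [hspec, conj_mul_conj hU2, trace_conj_diag hU2]
  have hne : S.Nonempty := ⟨_, key (fun _ => 1) (fun _ => one_pos) (by simp)⟩
  rcases eq_or_ne M.det 0 with h0 | h0
  · -- singular case : sInf S = 0
    have h1n : ((1 : ℝ) / n) ≠ 0 := by positivity
    rw [h0, Real.zero_rpow h1n]
    suffices hinf : sInf S = 0 by rw [hinf, mul_zero]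
    have hge : 0 ≤ sInf S := le_csInf hne fun x hx => by
      have := hlb x hx
      rw [h0, Real.zero_rpow h1n, mul_zero] at this
      exact this
    have hle : sInf S ≤ 0 := by
      refine le_of_forall_pos_le_add fun ε hε => ?_
      obtain ⟨j, -, hj⟩ : ∃ j ∈ Finset.univ, d j = 0 :=
        Finset.prod_eq_zero_iff.mp (by rw [← hdet]; exact h0)
      set T := ∑ i, d i with hT_def
      have hT0 : 0 ≤ T := Finset.sum_nonneg fun i _ => hd0 i
      set t := T / ε + 1 with ht_def
      have ht : 0 < t := by positivity
      set e : Fin n → ℝ := fun i => if i = j then t ^ (n - 1) else t⁻¹ with he_def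
      have he : ∀ i, 0 < e i := by
        intro i; simp only [he_def]; split <;> positivity
      have herase : ∀ i ∈ Finset.univ.erase j, e i = t⁻¹ := by
        intro i hi
        simp only [he_def, if_neg (Finset.ne_of_mem_erase hi)]
      have hcard : (Finset.univ.erase j).card = n - 1 := by
        rw [Finset.card_erase_of_mem (Finset.mem_univ j), Finset.card_univ, Fintype.card_fin]
      have hprod : (∏ i, e i) = 1 := by
        rw [← Finset.mul_prod_erase _ _ (Finset.mem_univ j),
          Finset.prod_congr rfl herase, Finset.prod_const, hcard]
        simp only [he_def, if_pos rfl]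
        rw [← mul_pow, mul_inv_cancel₀ ht.ne', one_pow]
      have hval : (∑ i, e i * d i) ≤ ε := by
        rw [← Finset.add_sum_erase _ _ (Finset.mem_univ j), hj, mul_zero, zero_add]
        have h1 : ∑ i ∈ Finset.univ.erase j, e i * d i
            = t⁻¹ * ∑ i ∈ Finset.univ.erase j, d i := by
          rw [Finset.mul_sum]
          exact Finset.sum_congr rfl fun i hi => by rw [herase i hi]
        rw [h1]
        have h2 : ∑ i ∈ Finset.univ.erase j, d i ≤ T :=
          Finset.sum_le_sum_of_subset_of_nonneg (Finset.erase_subset _ _)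
            (fun i _ _ => hd0 i)
        have h3 : t⁻¹ * T ≤ ε := by
          rw [inv_mul_le_iff₀ ht, ht_def]
          have : (T / ε + 1) * ε = T + ε := by field_simp
          rw [this]; linarith
        calc t⁻¹ * ∑ i ∈ Finset.univ.erase j, d i ≤ t⁻¹ * T := by
              exact mul_le_mul_of_nonneg_left h2 (by positivity)
          _ ≤ ε := h3
      have := csInf_le hbdd (key e he hprod)
      linarith
    linarith
  · -- positive definite case
    have hdpos : ∀ i, 0 < d i := by
      intro i
      rcases (hd0 i).lt_or_eq with h | h
      · exact h
      · exact absurd (by rw [hdet]; exact Finset.prod_eq_zero (Finset.mem_univ i) h.symm) h0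
    have hdetpos : 0 < M.det := by rw [hdet]; exact Finset.prod_pos fun i _ => hdpos i
    set c := M.det ^ ((1 : ℝ) / n) with hc_def
    have hc : 0 < c := Real.rpow_pos_of_pos hdetpos _
    have hcn : c ^ n = M.det := by
      rw [hc_def, ← Real.rpow_natCast (M.det ^ ((1:ℝ)/n)) n, ← Real.rpow_mul hdetpos.le,
        one_div, inv_mul_cancel₀ hnne, Real.rpow_one]
    set e : Fin n → ℝ := fun i => c / d i with he_def
    have he : ∀ i, 0 < e i := fun i => div_pos hc (hdpos i)
    have hprod : (∏ i, e i) = 1 := by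
      simp only [he_def]
      rw [Finset.prod_div_distrib, Finset.prod_const, Finset.card_univ, Fintype.card_fin,
        hcn, ← hdet, div_self h0]
    have hval : (∑ i, e i * d i) = n * c := by
      have : ∀ i ∈ Finset.univ, e i * d i = c := fun i _ => by
        simp only [he_def]; rw [div_mul_cancel₀ _ (hdpos i).ne']
      rw [Finset.sum_congr rfl this, Finset.sum_const, Finset.card_univ, Fintype.card_fin,
        nsmul_eq_mul]
    have hmem : ((n : ℝ) * c) ∈ S := hval ▸ key e he hprod
    have hinf : sInf S = n * c :=
      le_antisymm (csInf_le hbdd hmem) (le_csInf hne hlb)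
    rw [hinf]
    field_simp
end

section
/- Let n ≥ 1, let B be a real symmetric positive definite n×n matrix and let M be a real symmetric positive semidefinite n×n matrix. Then det B · det M ≤ ((1/n) · tr(B·M))^n. -/
open Matrix Finset
open scoped MatrixOrder

lemma trace_eq_sum_eigs {n : ℕ} {A : Matrix (Fin n) (Fin n) ℝ} (hA : A.IsHermitian) :
    A.trace = ∑ i, hA.eigenvalues i := by
  simpa using hA.trace_eq_sum_eigenvalues

lemma psd_det_le {n : ℕ} (hn : 1 ≤ n) {A : Matrix (Fin n) (Fin n) ℝ} (hA : A.PosSemidef) :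
    A.det ≤ ((1 / n) * A.trace) ^ n := by
  have hn' : (0:ℝ) < n := by positivity
  have hdet : A.det = ∏ i, hA.1.eigenvalues i := by
    simpa using hA.1.det_eq_prod_eigenvalues
  have htr : A.trace = ∑ i, hA.1.eigenvalues i := trace_eq_sum_eigs hA.1
  have hnng : ∀ i, 0 ≤ hA.1.eigenvalues i := hA.eigenvalues_nonneg
  have key : ∏ i, hA.1.eigenvalues i ^ ((1:ℝ)/n) ≤ ∑ i, (1/(n:ℝ)) * hA.1.eigenvalues i :=
    Real.geom_mean_le_arith_mean_weighted univ (fun _ => 1/(n:ℝ)) hA.1.eigenvalues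
      (fun i _ => by positivity)
      (by simp [Finset.card_univ]; field_simp)
      (fun i _ => hnng i)
  have h1 : A.det = (∏ i, hA.1.eigenvalues i ^ ((1:ℝ)/n)) ^ n := by
    rw [hdet, ← Finset.prod_pow]
    congr 1
    ext i
    rw [← Real.rpow_natCast (hA.1.eigenvalues i ^ ((1:ℝ)/n)) n,
      ← Real.rpow_mul (hnng i)]
    rw [one_div, inv_mul_cancel₀ (ne_of_gt hn'), Real.rpow_one]
  have h2 : (1 / (n:ℝ)) * A.trace = ∑ i, (1/(n:ℝ)) * hA.1.eigenvalues i := by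
    rw [htr, Finset.mul_sum]
  rw [h1, h2]
  exact pow_le_pow_left₀ (Finset.prod_nonneg fun i _ => Real.rpow_nonneg (hnng i) _) key n

/-- For `n ≥ 1`, a real symmetric positive definite `n × n` matrix `B` and a real symmetric
positive semidefinite `n × n` matrix `M`, one has `det B · det M ≤ ((1/n) · tr(B·M))^n`. -/
theorem det_mul_det_le_trace_pow (n : ℕ) (hn : 1 ≤ n)
    (B M : Matrix (Fin n) (Fin n) ℝ) (hB : B.PosDef) (hM : M.PosSemidef) :
    B.det * M.det ≤ ((1 / n) * (B * M).trace) ^ n := by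
  set S := CFC.sqrt B with hS
  have hSS : S * S = B := CFC.sqrt_mul_sqrt_self B hB.posSemidef.nonneg
  have hSH : Sᴴ = S := (CFC.sqrt_nonneg B).posSemidef.1
  have hpsd : (S * M * S).PosSemidef := by
    have := hM.mul_mul_conjTranspose_same S
    rwa [hSH] at this
  have hdet : (S * M * S).det = B.det * M.det := by
    rw [Matrix.det_mul, Matrix.det_mul, ← hSS, Matrix.det_mul]
    ring
  have htr : (S * M * S).trace = (B * M).trace := by
    rw [Matrix.trace_mul_cycle, hSS]
  calc B.det * M.det = (S * M * S).det := hdet.symm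
    _ ≤ ((1 / n) * (S * M * S).trace) ^ n := psd_det_le hn hpsd
    _ = ((1 / n) * (B * M).trace) ^ n := by rw [htr]
end

section
/- Let n ≥ 1 and let M be a real symmetric positive semidefinite n×n matrix with det M = 0 (i.e. M is singular). Then for every ε > 0 there exists B ∈ 𝓑 with tr(B·M) < ε; consequently inf_{B ∈ 𝓑} tr(B·M) = 0. -/
open Matrix Finset

lemma psd_trace_nonneg {n : ℕ} {P : Matrix (Fin n) (Fin n) ℝ} (hP : P.PosSemidef) :
    0 ≤ P.trace := by
  rw [Matrix.trace]
  refine Finset.sum_nonneg fun i _ => ?_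
  exact hP.diag_nonneg

open scoped MatrixOrder in
lemma posdef_mul_psd_trace_nonneg {n : ℕ} {B M : Matrix (Fin n) (Fin n) ℝ}
    (hB : B.PosDef) (hM : M.PosSemidef) : 0 ≤ (B * M).trace := by
  have hS : CFC.sqrt M ^ 2 = M := CFC.sq_sqrt M hM.nonneg
  have hSh : (CFC.sqrt M).IsHermitian := (CFC.sqrt_nonneg M).posSemidef.1
  have h1 : (B * M).trace = ((CFC.sqrt M)ᴴ * B * CFC.sqrt M).trace := by
    conv_lhs => rw [← hS]
    rw [pow_two, ← mul_assoc, Matrix.trace_mul_comm, ← mul_assoc, hSh.eq]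
  rw [h1]
  exact psd_trace_nonneg (hB.posSemidef.conjTranspose_mul_mul_same _)

lemma psd_posdef_of_det_ne_zero {n : ℕ} {B : Matrix (Fin n) (Fin n) ℝ}
    (hB : B.PosSemidef) (hd : B.det ≠ 0) : B.PosDef := by
  refine Matrix.PosDef.of_dotProduct_mulVec_pos hB.1 fun x hx => ?_
  rcases lt_or_eq_of_le (hB.dotProduct_mulVec_nonneg x) with h | h
  · exact h
  · exfalso
    have h0 : B *ᵥ x = 0 := (hB.dotProduct_mulVec_zero_iff x).mp h.symm
    have : x = 0 := by
      have hinj := Matrix.mulVec_injective_iff_isUnit.mpr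
        ((Matrix.isUnit_iff_isUnit_det B).mpr (isUnit_iff_ne_zero.mpr hd))
      have := hinj (a₁ := x) (a₂ := 0) (by simpa using h0)
      exact this
    exact hx this

/-- If `M` is a real symmetric positive semidefinite `n × n` matrix (`n ≥ 1`) with
`det M = 0`, then for every `ε > 0` there is `B ∈ 𝓑` (symmetric positive definite with
determinant `1`) such that `tr(B·M) < ε`; consequently `inf_{B ∈ 𝓑} tr(B·M) = 0`. -/
theorem singular_psd_inf_trace_eq_zero (n : ℕ) (hn : 1 ≤ n)
    (M : Matrix (Fin n) (Fin n) ℝ) (hM : M.PosSemidef) (hdet : M.det = 0) :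
    (∀ ε : ℝ, 0 < ε → ∃ B : Matrix (Fin n) (Fin n) ℝ,
        B.PosDef ∧ B.det = 1 ∧ (B * M).trace < ε) ∧
      sInf ((fun B : Matrix (Fin n) (Fin n) ℝ => (B * M).trace) ''
        {B : Matrix (Fin n) (Fin n) ℝ | B.PosDef ∧ B.det = 1}) = 0 := by
  have hH := hM.1
  set U : Matrix (Fin n) (Fin n) ℝ := (hH.eigenvectorUnitary : Matrix (Fin n) (Fin n) ℝ) with hU
  set d : Fin n → ℝ := hH.eigenvalues with hd
  have hspec : M = U * Matrix.diagonal d * star U := by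
    have := hH.spectral_theorem
    simpa using this
  have hUstar : star U * U = 1 := Matrix.mem_unitaryGroup_iff'.mp hH.eigenvectorUnitary.2
  have hUstar' : U * star U = 1 := Matrix.mem_unitaryGroup_iff.mp hH.eigenvectorUnitary.2
  have hdnonneg : ∀ i, 0 ≤ d i := hM.eigenvalues_nonneg
  -- there is a zero eigenvalue
  have hzero : ∃ i₀, d i₀ = 0 := by
    by_contra h
    push_neg at h
    have : M.det ≠ 0 := by
      rw [hH.det_eq_prod_eigenvalues]
      exact Finset.prod_ne_zero_iff.mpr fun i _ => by simpa using h i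
    exact this hdet
  obtain ⟨i₀, hi₀⟩ := hzero
  set T : ℝ := ∑ j, d j with hT
  have hTnonneg : 0 ≤ T := Finset.sum_nonneg fun j _ => hdnonneg j
  -- main construction
  have key : ∀ ε : ℝ, 0 < ε → ∃ B : Matrix (Fin n) (Fin n) ℝ,
      B.PosDef ∧ B.det = 1 ∧ (B * M).trace < ε := by
    intro ε hε
    set s : ℝ := min 1 (ε / (T + 1)) with hs
    have hspos : 0 < s := lt_min one_pos (div_pos hε (by linarith))
    set e : Fin n → ℝ := fun j => if j = i₀ then (s ^ (n - 1))⁻¹ else s with he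
    have hepos : ∀ j, 0 < e j := by
      intro j
      simp only [he]
      split
      · exact inv_pos.mpr (pow_pos hspos _)
      · exact hspos
    set B : Matrix (Fin n) (Fin n) ℝ := U * Matrix.diagonal e * star U with hB
    have hBpsd : B.PosSemidef := by
      have : (Matrix.diagonal e).PosSemidef :=
        (Matrix.PosDef.diagonal hepos).posSemidef
      simpa [hB, Matrix.star_eq_conjTranspose] using this.mul_mul_conjTranspose_same U
    have hdetB : B.det = 1 := by
      have hcard : (Finset.univ.erase i₀).card = n - 1 := by
        simp [Finset.card_erase_of_mem]
      have hprod : ∏ j, e j = 1 := by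
        rw [← Finset.mul_prod_erase _ _ (Finset.mem_univ i₀)]
        have h1 : e i₀ = (s ^ (n - 1))⁻¹ := by simp [he]
        have h2 : ∏ j ∈ Finset.univ.erase i₀, e j = s ^ (n - 1) := by
          rw [Finset.prod_congr rfl (fun j hj => ?_), Finset.prod_const, hcard]
          simp only [he]
          rw [if_neg (Finset.ne_of_mem_erase hj)]
        rw [h1, h2, inv_mul_cancel₀ (pow_ne_zero _ hspos.ne')]
      have : B.det = U.det * (∏ j, e j) * (star U).det := by
        simp [hB, Matrix.det_mul, Matrix.det_diagonal, mul_assoc]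
      rw [this, hprod]
      have : U.det * (star U).det = 1 := by
        rw [← Matrix.det_mul, hUstar', Matrix.det_one]
      linarith [this]
    have hBpos : B.PosDef := psd_posdef_of_det_ne_zero hBpsd (by rw [hdetB]; norm_num)
    refine ⟨B, hBpos, hdetB, ?_⟩
    have cancel : ∀ X : Matrix (Fin n) (Fin n) ℝ, star U * (U * X) = X := by
      intro X; rw [← mul_assoc, hUstar, one_mul]
    have htrace : (B * M).trace = ∑ j, e j * d j := by
      rw [hB, hspec]
      calc (U * Matrix.diagonal e * star U * (U * Matrix.diagonal d * star U)).trace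
          = (U * (Matrix.diagonal e * (Matrix.diagonal d * star U))).trace := by
            simp only [mul_assoc, cancel]
        _ = ((Matrix.diagonal e * (Matrix.diagonal d * star U)) * U).trace :=
            Matrix.trace_mul_comm _ _
        _ = (Matrix.diagonal e * Matrix.diagonal d).trace := by
            simp only [mul_assoc]; rw [hUstar, mul_one]
        _ = ∑ j, e j * d j := by
            rw [Matrix.diagonal_mul_diagonal, Matrix.trace_diagonal]
    have hsum : ∑ j, e j * d j = s * T := by
      rw [hT, Finset.mul_sum]
      refine Finset.sum_congr rfl fun j _ => ?_
      by_cases hj : j = i₀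
      · subst hj; rw [hi₀]; ring
      · simp [he, hj]
    rw [htrace, hsum]
    have h1 : s ≤ ε / (T + 1) := min_le_right _ _
    have h2 : s * T ≤ (ε / (T + 1)) * T := mul_le_mul_of_nonneg_right h1 hTnonneg
    have h3 : (ε / (T + 1)) * T < ε := by
      rw [div_mul_eq_mul_div, div_lt_iff₀ (by linarith)]
      nlinarith
    linarith
  refine ⟨key, ?_⟩
  have hbdd : ∀ x ∈ ((fun B : Matrix (Fin n) (Fin n) ℝ => (B * M).trace) ''
      {B : Matrix (Fin n) (Fin n) ℝ | B.PosDef ∧ B.det = 1}), 0 ≤ x := by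
    rintro x ⟨B, ⟨hBpos, _⟩, rfl⟩
    exact posdef_mul_psd_trace_nonneg hBpos hM
  have hne : ((fun B : Matrix (Fin n) (Fin n) ℝ => (B * M).trace) ''
      {B : Matrix (Fin n) (Fin n) ℝ | B.PosDef ∧ B.det = 1}).Nonempty := by
    obtain ⟨B, hB1, hB2, _⟩ := key 1 one_pos
    exact ⟨(B * M).trace, B, ⟨hB1, hB2⟩, rfl⟩
  refine le_antisymm ?_ (le_csInf hne hbdd)
  by_contra h
  push_neg at h
  obtain ⟨B, hB1, hB2, hB3⟩ := key _ h
  have : sInf _ ≤ (B * M).trace := csInf_le ⟨0, hbdd⟩ ⟨B, ⟨hB1, hB2⟩, rfl⟩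
  linarith
end
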